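/- Let g : [a,c) → E (E a Banach space, −∞ < a < c ≤ ∞) be locally Bochner integrable, and let Λ ⊆ [a,c) be a countable set with a family (z_λ)_{λ∈Λ} in E such that Σ_{λ∈Λ, λ<t} ‖z_λ‖ < ∞ for every t ∈ [a,c). Define u(t) = Σ_{λ∈Λ, λ<t} z_λ + ∫_a^t g(s) ds. Then for every λ ∈ Λ that is isolated from the right in Λ (i.e., (λ, λ+δ) ∩ Λ = ∅ for some δ > 0), the right limit u(λ⁺) exists and u(λ⁺) − u(λ) = z_λ. -/

import Mathlib

open MeasureTheory

/-- For `u(t) = Σ_{λ∈Λ, λ<t} z λ + ∫_a^t g`, with `g` locally Bochner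
integrable and the impulses absolutely summable over initial segments, the right
limit of `u` exists at every `λ ∈ Λ` isolated from the right in `Λ`, and equals
`u λ + z λ`, i.e. the jump is `z λ`. -/
theorem impulsive_solution_jump {E : Type*}
    [NormedAddCommGroup E] [NormedSpace ℝ E] [CompleteSpace E]
    (a : ℝ) (c : EReal) (hac : (a : EReal) < c)
    (D : Set ℝ) (hD : D = {t : ℝ | a ≤ t ∧ (t : EReal) < c})
    (g : ℝ → E) (hg : ∀ t ∈ D, IntegrableOn g (Set.Icc a t))
    (Λ : Set ℝ) (hΛ : Λ ⊆ D) (hΛc : Λ.Countable)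
    (z : ℝ → E)
    (hsum : ∀ t ∈ D, Summable (fun l : {x : ℝ // x ∈ Λ ∧ x < t} => ‖z l.1‖))
    (u : ℝ → E)
    (hu : ∀ t ∈ D,
      u t = (∑' l : {x : ℝ // x ∈ Λ ∧ x < t}, z l.1) + ∫ s in a..t, g s) :
    ∀ l ∈ Λ, (∃ δ > (0 : ℝ), ∀ x ∈ Set.Ioo l (l + δ), x ∉ Λ) →
      Filter.Tendsto u (nhdsWithin l (Set.Ioi l)) (nhds (u l + z l)) := by
  rintro l hlΛ ⟨δ, hδ, hiso⟩
  have hlD : l ∈ D := hΛ hlΛ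
  have hlD' := hlD
  rw [hD] at hlD'
  obtain ⟨hal, hlc⟩ := hlD'
  obtain ⟨b, hlb, hbc⟩ : ∃ b : ℝ, l < b ∧ (b : EReal) < c := by
    rcases EReal.lt_iff_exists_real_btwn.1 hlc with ⟨x, hx1, hx2⟩
    exact ⟨x, by exact_mod_cast hx1, hx2⟩
  have hab : a ≤ b := hal.trans hlb.le
  have hbD : b ∈ D := by rw [hD]; exact ⟨hab, hbc⟩
  set m := min (l + δ) b with hm
  have hlm : l < m := lt_min (by linarith) hlb
  -- membership of points of Ioo l m in D
  have htD : ∀ t ∈ Set.Ioo l m, t ∈ D := by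
    intro t ht
    rw [hD]
    refine ⟨hal.trans ht.1.le, lt_trans ?_ hbc⟩
    exact_mod_cast ht.2.trans_le (min_le_right _ _)
  -- the sum over the initial segment up to l
  set S : E := ∑' x : {x : ℝ // x ∈ Λ ∧ x < l}, z x.1 with hS
  have hSl : Summable (fun x : ↥({x : ℝ | x ∈ Λ ∧ x < l}) => z x.1) :=
    (hsum l hlD).of_norm
  have hSsing : Summable (fun x : ↥({l} : Set ℝ) => z x.1) :=
    (Set.finite_singleton l).summable _
  -- for t ∈ Ioo l m the sum picks up exactly z l
  have hsum_eq : ∀ t ∈ Set.Ioo l m,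
      (∑' x : {x : ℝ // x ∈ Λ ∧ x < t}, z x.1) = S + z l := by
    intro t ht
    have hset : {x : ℝ | x ∈ Λ ∧ x < t} = {x : ℝ | x ∈ Λ ∧ x < l} ∪ {l} := by
      ext x
      simp only [Set.mem_setOf_eq, Set.mem_union, Set.mem_singleton_iff]
      constructor
      · rintro ⟨hxΛ, hxt⟩
        rcases lt_trichotomy x l with h | h | h
        · exact Or.inl ⟨hxΛ, h⟩
        · exact Or.inr h
        · exact absurd hxΛ (hiso x ⟨h, hxt.trans (lt_of_lt_of_le ht.2 (min_le_left _ _))⟩)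
      · rintro (⟨hxΛ, hxl⟩ | rfl)
        · exact ⟨hxΛ, hxl.trans ht.1⟩
        · exact ⟨hlΛ, ht.1⟩
    have hd : Disjoint {x : ℝ | x ∈ Λ ∧ x < l} ({l} : Set ℝ) := by
      rw [Set.disjoint_singleton_right]
      rintro ⟨-, h⟩; exact lt_irrefl l h
    calc (∑' x : ↥({x : ℝ | x ∈ Λ ∧ x < t}), z x.1)
        = ∑' x : ↥({x : ℝ | x ∈ Λ ∧ x < l} ∪ {l}), z x.1 := by rw [hset]
      _ = S + z l := by
          rw [hSl.tsum_union_disjoint hd hSsing, tsum_singleton l z]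
          rfl
  -- continuity of the primitive from the right at l
  have hint : Filter.Tendsto (fun t => ∫ s in a..t, g s)
      (nhdsWithin l (Set.Ioi l)) (nhds (∫ s in a..l, g s)) := by
    have hgb : IntegrableOn g (Set.Icc a b) := hg b hbD
    have hii : IntervalIntegrable g volume (min a l) (max a b) := by
      rw [min_eq_left hal, max_eq_right hab]
      exact (intervalIntegrable_iff_integrableOn_Icc_of_le hab).2 hgb
    have hcw : ContinuousWithinAt (fun t => ∫ s in a..t, g s) (Set.Icc l b) l :=
      intervalIntegral.continuousWithinAt_primitive (measure_singleton l) hii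
    have h1 : nhdsWithin l (Set.Ioo l b) = nhdsWithin l (Set.Ioi l) :=
      nhdsWithin_Ioo_eq_nhdsGT hlb
    have h2 : nhdsWithin l (Set.Ioo l b) ≤ nhdsWithin l (Set.Icc l b) :=
      nhdsWithin_mono l Set.Ioo_subset_Icc_self
    exact hcw.tendsto.mono_left (h1 ▸ h2)
  -- eventual formula for u
  have hev : ∀ᶠ t in nhdsWithin l (Set.Ioi l),
      u t = (u l + z l) + ((∫ s in a..t, g s) - ∫ s in a..l, g s) := by
    filter_upwards [Ioo_mem_nhdsGT_of_mem (Set.mem_Ico.2 ⟨le_refl l, hlm⟩)] with t ht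
    rw [hu t (htD t ht), hsum_eq t ht, hu l hlD]
    abel
  have hTend : Filter.Tendsto
      (fun t => (u l + z l) + ((∫ s in a..t, g s) - ∫ s in a..l, g s))
      (nhdsWithin l (Set.Ioi l)) (nhds (u l + z l)) := by
    have := Filter.Tendsto.const_add (u l + z l)
      (hint.sub (tendsto_const_nhds (x := ∫ s in a..l, g s)))
    simpa using this
  exact hTend.congr' (hev.mono fun t ht => ht.symm)
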